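/- arXiv:1704.04286 — 3 statements merged into one kernel-verified Lean document; each statement's English description precedes it below -/
import Mathlib

section
/- Given short exact sequences 0 → P → E → R → 0 ([E] ∈ Ext¹(R,P)), 0 → P → H → S → 0 ([H] ∈ Ext¹(S,P)), 0 → R → F → Q → 0 ([F] ∈ Ext¹(Q,R)), and 0 → S → G → Q → 0 ([G] ∈ Ext¹(Q,S)), the Yoneda products satisfy: the Baer sum [E]∪[F] + [H]∪[G] in Ext²(Q,P) equals the class of the 2-extension 0 → P → W → Y → Q → 0, where W is the pushout of E ⊕ H along the codiagonal P ⊕ P → P, Y is the pullback F ×_Q G, and W → Y is the composite W → R ⊕ S → Y. -/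
open CategoryTheory Abelian Limits

universe w v u

section Auxiliary

open CategoryTheory.Category DerivedCategory

universe w' w'' v' u'

namespace CochainComplex.mappingCone

variable {C : Type u'} [Category.{v'} C] [Abelian C]

/-- Naturality of `descShortComplex` with respect to morphisms of short complexes
of cochain complexes. -/
lemma map_descShortComplex' {S₁ S₂ : ShortComplex (CochainComplex C ℤ)} (φ : S₁ ⟶ S₂) :
    map S₁.f S₂.f φ.τ₁ φ.τ₂ φ.comm₁₂.symm ≫ descShortComplex S₂ =
      descShortComplex S₁ ≫ φ.τ₃ := by
  ext n
  rw [HomologicalComplex.comp_f, HomologicalComplex.comp_f]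
  rw [ext_from_iff _ (n + 1) n rfl]
  constructor
  · simp [map]
  · simp [map, ← HomologicalComplex.comp_f, φ.comm₂₃]

end CochainComplex.mappingCone

namespace DerivedCategory

variable {C : Type u'} [Category.{v'} C] [Abelian C] [HasDerivedCategory.{w'} C]

/-- Naturality of the connecting map of the triangle associated to a short
exact sequence of cochain complexes. -/
lemma triangleOfSESδ_natural' {S₁ S₂ : ShortComplex (CochainComplex C ℤ)}
    (h₁ : S₁.ShortExact) (h₂ : S₂.ShortExact) (φ : S₁ ⟶ S₂) :
    Q.map φ.τ₃ ≫ triangleOfSESδ h₂ =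
      triangleOfSESδ h₁ ≫ (Q.map φ.τ₁)⟦(1 : ℤ)⟧' := by
  have := CochainComplex.mappingCone.quasiIso_descShortComplex h₁
  have := CochainComplex.mappingCone.quasiIso_descShortComplex h₂
  set m := CochainComplex.mappingCone.map S₁.f S₂.f φ.τ₁ φ.τ₂ φ.comm₁₂.symm with hm
  have h1 : Q.map φ.τ₃ ≫ inv (Q.map (CochainComplex.mappingCone.descShortComplex S₂)) =
      inv (Q.map (CochainComplex.mappingCone.descShortComplex S₁)) ≫ Q.map m := by
    rw [IsIso.comp_inv_eq, assoc, IsIso.eq_inv_comp, ← Q.map_comp, ← Q.map_comp,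
      CochainComplex.mappingCone.map_descShortComplex' φ]
  have h2 : m ≫ (CochainComplex.mappingCone.triangle S₂.f).mor₃ =
      (CochainComplex.mappingCone.triangle S₁.f).mor₃ ≫ φ.τ₁⟦(1 : ℤ)⟧' :=
    (CochainComplex.mappingCone.triangleMap S₁.f S₂.f φ.τ₁ φ.τ₂ φ.comm₁₂.symm).comm₃.symm
  have h3 : Q.map (φ.τ₁⟦(1 : ℤ)⟧') ≫ (Q.commShiftIso (1 : ℤ)).hom.app S₂.X₁ =
      (Q.commShiftIso (1 : ℤ)).hom.app S₁.X₁ ≫ (Q.map φ.τ₁)⟦(1 : ℤ)⟧' :=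
    (Q.commShiftIso (1 : ℤ)).hom.naturality φ.τ₁
  dsimp only [triangleOfSESδ]
  rw [← assoc, h1, assoc]
  erw [← Q.map_comp_assoc, h2, Q.map_comp, assoc, assoc, h3]
  exact congrArg (fun x => _ ≫ x) (assoc _ _ _).symm

end DerivedCategory

namespace CategoryTheory.ShortComplex.ShortExact

variable {C : Type u'} [Category.{v'} C] [Abelian C]

/-- Naturality of `singleδ` with respect to morphisms of short exact complexes. -/
lemma singleδ_natural' [HasDerivedCategory.{w'} C] {S₁ S₂ : ShortComplex C}
    (h₁ : S₁.ShortExact) (h₂ : S₂.ShortExact) (φ : S₁ ⟶ S₂) :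
    (singleFunctor C 0).map φ.τ₃ ≫ h₂.singleδ =
      h₁.singleδ ≫ ((singleFunctor C 0).map φ.τ₁)⟦(1 : ℤ)⟧' := by
  let F := HomologicalComplex.single C (ComplexShape.up ℤ) 0
  let φ' : S₁.map F ⟶ S₂.map F :=
    { τ₁ := F.map φ.τ₁
      τ₂ := F.map φ.τ₂
      τ₃ := F.map φ.τ₃
      comm₁₂ := by dsimp [F]; erw [← F.map_comp, ← F.map_comp, φ.comm₁₂]
      comm₂₃ := by dsimp [F]; erw [← F.map_comp, ← F.map_comp, φ.comm₂₃] }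
  let e := (SingleFunctors.evaluation _ _ 0).mapIso (singleFunctorsPostcompQIso C)
  have n3 := DerivedCategory.triangleOfSESδ_natural'
    (h₁.map_of_exact (HomologicalComplex.single C (ComplexShape.up ℤ) 0))
    (h₂.map_of_exact (HomologicalComplex.single C (ComplexShape.up ℤ) 0)) φ'
  have n1 : (singleFunctor C 0).map φ.τ₃ ≫ e.hom.app S₂.X₃ =
      e.hom.app S₁.X₃ ≫ DerivedCategory.Q.map (F.map φ.τ₃) := e.hom.naturality φ.τ₃
  have n2 : DerivedCategory.Q.map (F.map φ.τ₁) ≫ e.inv.app S₂.X₁ =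
      e.inv.app S₁.X₁ ≫ (singleFunctor C 0).map φ.τ₁ := e.inv.naturality φ.τ₁
  have n2' : (DerivedCategory.Q.map (F.map φ.τ₁))⟦(1:ℤ)⟧' ≫ (e.inv.app S₂.X₁)⟦(1:ℤ)⟧' =
      (e.inv.app S₁.X₁)⟦(1:ℤ)⟧' ≫ ((singleFunctor C 0).map φ.τ₁)⟦(1:ℤ)⟧' := by
    erw [← Functor.map_comp, n2, Functor.map_comp]
    rfl
  dsimp only [ShortComplex.ShortExact.singleδ]
  erw [← Category.assoc, n1, Category.assoc]
  have n3' : DerivedCategory.Q.map (F.map φ.τ₃) ≫ DerivedCategory.triangleOfSESδ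
        (h₂.map_of_exact (HomologicalComplex.single C (ComplexShape.up ℤ) 0)) =
      DerivedCategory.triangleOfSESδ
        (h₁.map_of_exact (HomologicalComplex.single C (ComplexShape.up ℤ) 0)) ≫
        (DerivedCategory.Q.map (F.map φ.τ₁))⟦(1:ℤ)⟧' := n3
  have key : DerivedCategory.Q.map (F.map φ.τ₃) ≫ DerivedCategory.triangleOfSESδ
        (h₂.map_of_exact (HomologicalComplex.single C (ComplexShape.up ℤ) 0)) ≫
        (e.inv.app S₂.X₁)⟦(1:ℤ)⟧' =
      DerivedCategory.triangleOfSESδ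
        (h₁.map_of_exact (HomologicalComplex.single C (ComplexShape.up ℤ) 0)) ≫
        (e.inv.app S₁.X₁)⟦(1:ℤ)⟧' ≫ ((singleFunctor C 0).map φ.τ₁)⟦(1:ℤ)⟧' := by
    exact (Category.assoc _ _ _).symm.trans ((congrArg (· ≫ _) n3').trans
      ((Category.assoc _ _ _).trans (congrArg (_ ≫ ·) n2')))
  exact (congrArg (e.hom.app S₁.X₃ ≫ ·) key).trans ((Category.assoc _ _ _).symm.trans
    ((Category.assoc _ _ _).symm.trans (congrArg (· ≫ _) (Category.assoc _ _ _))))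

variable [HasExt.{w''} C]

/-- Naturality of the extension class with respect to morphisms of short
exact complexes. -/
lemma extClass_natural' {S₁ S₂ : ShortComplex C}
    (h₁ : S₁.ShortExact) (h₂ : S₂.ShortExact) (φ : S₁ ⟶ S₂) :
    (Ext.mk₀ φ.τ₃).comp h₂.extClass (zero_add 1) =
      h₁.extClass.comp (Ext.mk₀ φ.τ₁) (add_zero 1) := by
  letI := HasDerivedCategory.standard C
  ext
  rw [Ext.comp_hom, Ext.comp_hom, Ext.mk₀_hom, Ext.mk₀_hom,
    h₁.extClass_hom, h₂.extClass_hom, ShiftedHom.mk₀_comp, ShiftedHom.comp_mk₀]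
  exact singleδ_natural' h₁ h₂ φ

end CategoryTheory.ShortComplex.ShortExact

end Auxiliary


/-- Given extensions `[E] ∈ Ext¹(R,P)`, `[H] ∈ Ext¹(S,P)`, `[F] ∈ Ext¹(Q,R)`,
`[G] ∈ Ext¹(Q,S)`, the Baer sum `[E]∪[F] + [H]∪[G]` in `Ext²(Q,P)` equals the
class of the 2-extension `0 → P → W → Y → Q → 0`, where `W` is the pushout of
`E ⊕ H` along the codiagonal `P ⊕ P → P`, `Y = F ×_Q G`, and the 2-extension
is the splice of `0 → P → W → R ⊕ S → 0` with `0 → R ⊕ S → Y → Q → 0`. -/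
theorem statement9 {A : Type u} [CommRing A] [HasExt.{w} (ModuleCat.{v} A)]
    {P E R H S F G Q : ModuleCat.{v} A}
    (pe : P ⟶ E) (er : E ⟶ R) (wE : pe ≫ er = 0)
    (hE : (ShortComplex.mk pe er wE).ShortExact)
    (ph : P ⟶ H) (hs : H ⟶ S) (wH : ph ≫ hs = 0)
    (hH : (ShortComplex.mk ph hs wH).ShortExact)
    (rf : R ⟶ F) (fq : F ⟶ Q) (wF : rf ≫ fq = 0)
    (hF : (ShortComplex.mk rf fq wF).ShortExact)
    (sg : S ⟶ G) (gq : G ⟶ Q) (wG : sg ≫ gq = 0)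
    (hG : (ShortComplex.mk sg gq wG).ShortExact)
    -- `Y = F ×_Q G`, with the short exact sequence `0 → R ⊕ S → Y → Q → 0`
    {Y : ModuleCat.{v} A} (yF : Y ⟶ F) (yG : Y ⟶ G)
    (hYpb : IsPullback yF yG fq gq)
    (ιY : R ⊞ S ⟶ Y)
    (hιYF : ιY ≫ yF = biprod.desc rf 0) (hιYG : ιY ≫ yG = biprod.desc 0 sg)
    (wY : ιY ≫ (yF ≫ fq) = 0)
    (hY : (ShortComplex.mk ιY (yF ≫ fq) wY).ShortExact)
    -- `W` is the pushout of `E ⊕ H` along the codiagonal, with the short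
    -- exact sequence `0 → P → W → R ⊕ S → 0`
    {W : ModuleCat.{v} A} (pW : P ⟶ W) (wEH : E ⊞ H ⟶ W)
    (hWpo : IsPushout (biprod.desc (𝟙 P) (𝟙 P)) (biprod.map pe ph) pW wEH)
    (πW : W ⟶ R ⊞ S) (hπW : wEH ≫ πW = biprod.map er hs)
    (wW : pW ≫ πW = 0)
    (hW : (ShortComplex.mk pW πW wW).ShortExact) :
    (hF.extClass.comp hE.extClass (by norm_num) +
      hG.extClass.comp hH.extClass (by norm_num) : Ext Q P 2) =
    hY.extClass.comp hW.extClass (by norm_num) := by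
  -- morphism from the `Y`-sequence to the `F`-sequence
  let φF : ShortComplex.mk ιY (yF ≫ fq) wY ⟶ ShortComplex.mk rf fq wF :=
    { τ₁ := biprod.fst
      τ₂ := yF
      τ₃ := 𝟙 Q
      comm₁₂ := by
        dsimp
        rw [hιYF]
        apply biprod.hom_ext' <;> simp
      comm₂₃ := by dsimp; rw [Category.comp_id] }
  let φG : ShortComplex.mk ιY (yF ≫ fq) wY ⟶ ShortComplex.mk sg gq wG :=
    { τ₁ := biprod.snd
      τ₂ := yG
      τ₃ := 𝟙 Q
      comm₁₂ := by
        dsimp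
        rw [hιYG]
        apply biprod.hom_ext' <;> simp
      comm₂₃ := by dsimp; rw [Category.comp_id, hYpb.w] }
  let ψE : ShortComplex.mk pe er wE ⟶ ShortComplex.mk pW πW wW :=
    { τ₁ := 𝟙 P
      τ₂ := biprod.inl ≫ wEH
      τ₃ := biprod.inl
      comm₁₂ := by
        dsimp
        rw [Category.id_comp]
        have h := hWpo.w
        calc pW = biprod.inl ≫ biprod.desc (𝟙 P) (𝟙 P) ≫ pW := by simp
          _ = biprod.inl ≫ biprod.map pe ph ≫ wEH := by rw [h]
          _ = pe ≫ biprod.inl ≫ wEH := by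
              rw [← Category.assoc, ← Category.assoc, biprod.inl_map]
      comm₂₃ := by
        dsimp
        rw [Category.assoc, hπW, biprod.inl_map] }
  let ψH : ShortComplex.mk ph hs wH ⟶ ShortComplex.mk pW πW wW :=
    { τ₁ := 𝟙 P
      τ₂ := biprod.inr ≫ wEH
      τ₃ := biprod.inr
      comm₁₂ := by
        dsimp
        rw [Category.id_comp]
        have h := hWpo.w
        calc pW = biprod.inr ≫ biprod.desc (𝟙 P) (𝟙 P) ≫ pW := by simp
          _ = biprod.inr ≫ biprod.map pe ph ≫ wEH := by rw [h]
          _ = ph ≫ biprod.inr ≫ wEH := by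
              rw [← Category.assoc, ← Category.assoc, biprod.inr_map]
      comm₂₃ := by
        dsimp
        rw [Category.assoc, hπW, biprod.inr_map] }
  have eF : hF.extClass = hY.extClass.comp (Ext.mk₀ (biprod.fst : R ⊞ S ⟶ R)) (add_zero 1) := by
    have h := ShortComplex.ShortExact.extClass_natural' hY hF φF
    simpa [φF] using h
  have eG : hG.extClass = hY.extClass.comp (Ext.mk₀ (biprod.snd : R ⊞ S ⟶ S)) (add_zero 1) := by
    have h := ShortComplex.ShortExact.extClass_natural' hY hG φG
    simpa [φG] using h
  have eE : hE.extClass = (Ext.mk₀ (biprod.inl : R ⟶ R ⊞ S)).comp hW.extClass (zero_add 1) := by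
    have h := ShortComplex.ShortExact.extClass_natural' hE hW ψE
    simpa [ψE] using h.symm
  have eH : hH.extClass = (Ext.mk₀ (biprod.inr : S ⟶ R ⊞ S)).comp hW.extClass (zero_add 1) := by
    have h := ShortComplex.ShortExact.extClass_natural' hH hW ψH
    simpa [ψH] using h.symm
  have key : (Ext.mk₀ (biprod.fst ≫ biprod.inl : R ⊞ S ⟶ R ⊞ S)).comp hW.extClass (zero_add 1)
      + (Ext.mk₀ (biprod.snd ≫ biprod.inr : R ⊞ S ⟶ R ⊞ S)).comp hW.extClass (zero_add 1)
      = hW.extClass := by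
    apply Ext.biprod_ext <;> simp
  rw [eF, eG, eE, eH, Ext.comp_assoc_of_second_deg_zero, Ext.comp_assoc_of_second_deg_zero,
    Ext.mk₀_comp_mk₀_assoc, Ext.mk₀_comp_mk₀_assoc, ← Ext.comp_add, key]
end

section
/- Given the four short exact sequences of the previous setup and the sequence 0 → R ⊕ S → Y → Q → 0 with Y = F ×_Q G, let δ_Y : Ext¹(R ⊕ S, P) → Ext²(Q, P) be the connecting homomorphism from applying Hom(−, P). Then for the class [W] ∈ Ext¹(R ⊕ S, P) of the codiagonal pushout of E ⊕ H, δ_Y([W]) equals the Baer sum of [E]∪[F] and [H]∪[G] in Ext²(Q, P). -/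
open CategoryTheory Category Limits Pretriangulated

universe w v u

namespace MyAux

variable {C : Type u} [Category.{v} C] [Abelian C]

open CochainComplex

lemma map_descShortComplex {S₁ S₂ : ShortComplex (CochainComplex C ℤ)} (φ : S₁ ⟶ S₂) :
    mappingCone.map S₁.f S₂.f φ.τ₁ φ.τ₂ φ.comm₁₂.symm ≫
      mappingCone.descShortComplex S₂ =
    mappingCone.descShortComplex S₁ ≫ φ.τ₃ := by
  ext n
  simp [mappingCone.ext_from_iff _ (n+1) n rfl, mappingCone.map,
    mappingCone.descShortComplex]
  exact (HomologicalComplex.congr_hom φ.comm₂₃ n)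

end MyAux

namespace MyAux

open DerivedCategory CochainComplex

variable {C : Type u} [Category.{v} C] [Abelian C]

lemma triangleOfSESδ_naturality [HasDerivedCategory.{w} C]
    {S₁ S₂ : ShortComplex (CochainComplex C ℤ)} (φ : S₁ ⟶ S₂)
    (hS₁ : S₁.ShortExact) (hS₂ : S₂.ShortExact) :
    Q.map φ.τ₃ ≫ triangleOfSESδ hS₂ =
      triangleOfSESδ hS₁ ≫ (Q.map φ.τ₁)⟦(1:ℤ)⟧' := by
  have := CochainComplex.mappingCone.quasiIso_descShortComplex hS₁
  have := CochainComplex.mappingCone.quasiIso_descShortComplex hS₂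
  dsimp only [triangleOfSESδ]
  have h1 : Q.map φ.τ₃ ≫ inv (Q.map (mappingCone.descShortComplex S₂)) =
      inv (Q.map (mappingCone.descShortComplex S₁)) ≫
        Q.map (mappingCone.map S₁.f S₂.f φ.τ₁ φ.τ₂ φ.comm₁₂.symm) := by
    rw [IsIso.eq_inv_comp, ← assoc, IsIso.comp_inv_eq, ← Q.map_comp, ← Q.map_comp,
      map_descShortComplex]
  have h2 := (mappingCone.triangleMap S₁.f S₂.f φ.τ₁ φ.τ₂ φ.comm₁₂.symm).comm₃
  rw [← assoc, h1, assoc]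
  erw [← Q.map_comp_assoc (mappingCone.map S₁.f S₂.f φ.τ₁ φ.τ₂ φ.comm₁₂.symm)
    (mappingCone.triangle S₂.f).mor₃]
  erw [← h2]
  erw [Q.map_comp_assoc (mappingCone.triangle S₁.f).mor₃
    ((CategoryTheory.shiftFunctor (CochainComplex C ℤ) 1).map
      (mappingCone.triangleMap S₁.f S₂.f φ.τ₁ φ.τ₂ φ.comm₁₂.symm).hom₁)]
  erw [Functor.commShiftIso_hom_naturality Q
    (mappingCone.triangleMap S₁.f S₂.f φ.τ₁ φ.τ₂ φ.comm₁₂.symm).hom₁ (1:ℤ)]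
  exact ((assoc _ _ _).trans (congrArg (fun t => _ ≫ t) (assoc _ _ _))).symm

end MyAux

namespace MyAux

open DerivedCategory

variable {C : Type u} [Category.{v} C] [Abelian C]

lemma singleδ_naturality [HasDerivedCategory.{w} C] {S₁ S₂ : ShortComplex C}
    (φ : S₁ ⟶ S₂) (hS₁ : S₁.ShortExact) (hS₂ : S₂.ShortExact) :
    (DerivedCategory.singleFunctor C 0).map φ.τ₃ ≫ hS₂.singleδ =
      hS₁.singleδ ≫ ((DerivedCategory.singleFunctor C 0).map φ.τ₁)⟦(1:ℤ)⟧' := by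
  dsimp only [ShortComplex.ShortExact.singleδ]
  have h := triangleOfSESδ_naturality
    ((HomologicalComplex.single C (ComplexShape.up ℤ) 0).mapShortComplex.map φ)
    (hS₁.map_of_exact _) (hS₂.map_of_exact _)
  set ε := (SingleFunctors.evaluation C (DerivedCategory C) 0).mapIso
    (singleFunctorsPostcompQIso C) with hε
  have h3 : (DerivedCategory.singleFunctor C 0).map φ.τ₃ ≫ ε.hom.app S₂.X₃ =
      ε.hom.app S₁.X₃ ≫ Q.map ((HomologicalComplex.single C (ComplexShape.up ℤ) 0).map φ.τ₃) :=
    ε.hom.naturality φ.τ₃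
  have h1 : Q.map ((HomologicalComplex.single C (ComplexShape.up ℤ) 0).map φ.τ₁) ≫
        ε.inv.app S₂.X₁ =
      ε.inv.app S₁.X₁ ≫ (DerivedCategory.singleFunctor C 0).map φ.τ₁ :=
    ε.inv.naturality φ.τ₁
  erw [← assoc ((DerivedCategory.singleFunctor C 0).map φ.τ₃) (ε.hom.app S₂.X₃)]
  rw [h3]
  erw [assoc (ε.hom.app S₁.X₃)]
  erw [reassoc_of% h]
  erw [← Functor.map_comp]
  erw [h1]
  erw [Functor.map_comp]
  exact ((assoc _ _ _).trans (congrArg (fun t => _ ≫ t) (assoc _ _ _))).symm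

end MyAux

namespace MyAux

open Abelian

variable {C : Type u} [Category.{v} C] [Abelian C] [HasExt.{w} C]

lemma extClass_naturality {S₁ S₂ : ShortComplex C}
    (φ : S₁ ⟶ S₂) (hS₁ : S₁.ShortExact) (hS₂ : S₂.ShortExact) :
    (Ext.mk₀ φ.τ₃).comp hS₂.extClass (zero_add 1) =
      hS₁.extClass.comp (Ext.mk₀ φ.τ₁) (add_zero 1) := by
  letI := HasDerivedCategory.standard C
  ext
  rw [Ext.comp_hom, Ext.comp_hom, Ext.mk₀_hom, Ext.mk₀_hom,
    ShortComplex.ShortExact.extClass_hom, ShortComplex.ShortExact.extClass_hom,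
    ShiftedHom.mk₀_comp, ShiftedHom.comp_mk₀]
  exact singleδ_naturality φ hS₁ hS₂

end MyAux

namespace MyAux

open Abelian

variable {C : Type u} [Category.{v} C] [Abelian C] [HasExt.{w} C]

lemma mk₀_add {X Y : C} (f g : X ⟶ Y) :
    Ext.mk₀ (f + g) = Ext.mk₀ f + Ext.mk₀ g := by
  letI := HasDerivedCategory.standard C
  ext
  rw [Ext.add_hom, Ext.mk₀_hom, Ext.mk₀_hom, Ext.mk₀_hom, Functor.map_add]
  simp [ShiftedHom.mk₀, Preadditive.add_comp]

end MyAux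
open CategoryTheory Abelian Limits

set_option maxHeartbeats 1600000 in
/-- For `[W] ∈ Ext¹(R ⊕ S, P)` the class of the codiagonal pushout of
`E ⊕ H`, the image `δ_Y([W])` of `[W]` under the connecting homomorphism
`δ_Y : Ext¹(R ⊕ S, P) → Ext²(Q, P)` of the sequence `0 → R ⊕ S → Y → Q → 0`
(which is given by splicing, i.e. by composition with the extension class of
`0 → R ⊕ S → Y → Q → 0`) equals the Baer sum of the Yoneda products
`[E]∪[F]` and `[H]∪[G]` in `Ext²(Q, P)`. -/
theorem statement10 {A : Type u} [CommRing A] [HasExt.{w} (ModuleCat.{v} A)]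
    {P E R H S F G Q : ModuleCat.{v} A}
    (pe : P ⟶ E) (er : E ⟶ R) (wE : pe ≫ er = 0)
    (hE : (ShortComplex.mk pe er wE).ShortExact)
    (ph : P ⟶ H) (hs : H ⟶ S) (wH : ph ≫ hs = 0)
    (hH : (ShortComplex.mk ph hs wH).ShortExact)
    (rf : R ⟶ F) (fq : F ⟶ Q) (wF : rf ≫ fq = 0)
    (hF : (ShortComplex.mk rf fq wF).ShortExact)
    (sg : S ⟶ G) (gq : G ⟶ Q) (wG : sg ≫ gq = 0)
    (hG : (ShortComplex.mk sg gq wG).ShortExact)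
    -- `Y = F ×_Q G`, with the short exact sequence `0 → R ⊕ S → Y → Q → 0`
    {Y : ModuleCat.{v} A} (yF : Y ⟶ F) (yG : Y ⟶ G)
    (hYpb : IsPullback yF yG fq gq)
    (ιY : R ⊞ S ⟶ Y)
    (hιYF : ιY ≫ yF = biprod.desc rf 0) (hιYG : ιY ≫ yG = biprod.desc 0 sg)
    (wY : ιY ≫ (yF ≫ fq) = 0)
    (hY : (ShortComplex.mk ιY (yF ≫ fq) wY).ShortExact)
    -- `W` is the pushout of `E ⊕ H` along the codiagonal, with the short
    -- exact sequence `0 → P → W → R ⊕ S → 0`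
    {W : ModuleCat.{v} A} (pW : P ⟶ W) (wEH : E ⊞ H ⟶ W)
    (hWpo : IsPushout (biprod.desc (𝟙 P) (𝟙 P)) (biprod.map pe ph) pW wEH)
    (πW : W ⟶ R ⊞ S) (hπW : wEH ≫ πW = biprod.map er hs)
    (wW : pW ≫ πW = 0)
    (hW : (ShortComplex.mk pW πW wW).ShortExact) :
    (hY.extClass.comp hW.extClass (by norm_num) : Ext Q P 2) =
    hF.extClass.comp hE.extClass (by norm_num) +
      hG.extClass.comp hH.extClass (by norm_num) := by
  -- the four comparison morphisms of short exact sequences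
  have hpW : pW = pe ≫ (biprod.inl ≫ wEH) := by
    have := hWpo.w
    have h := biprod.inl ≫= this
    simpa using h
  have hpW' : pW = ph ≫ (biprod.inr ≫ wEH) := by
    have := hWpo.w
    have h := biprod.inr ≫= this
    simpa using h
  let φF : ShortComplex.mk ιY (yF ≫ fq) wY ⟶ ShortComplex.mk rf fq wF :=
    { τ₁ := biprod.fst
      τ₂ := yF
      τ₃ := 𝟙 Q
      comm₁₂ := by
        rw [hιYF]
        exact (biprod.hom_ext' _ _ (by simp) (by simp)).symm
      comm₂₃ := by simp }
  let φG : ShortComplex.mk ιY (yF ≫ fq) wY ⟶ ShortComplex.mk sg gq wG :=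
    { τ₁ := biprod.snd
      τ₂ := yG
      τ₃ := 𝟙 Q
      comm₁₂ := by
        rw [hιYG]
        exact (biprod.hom_ext' _ _ (by simp) (by simp)).symm
      comm₂₃ := by
        dsimp
        rw [Category.comp_id]
        exact hYpb.w.symm }
  let φE : ShortComplex.mk pe er wE ⟶ ShortComplex.mk pW πW wW :=
    { τ₁ := 𝟙 P
      τ₂ := biprod.inl ≫ wEH
      τ₃ := biprod.inl
      comm₁₂ := by rw [← hpW]; simp
      comm₂₃ := by
        dsimp
        rw [Category.assoc, hπW]
        simp }
  let φH : ShortComplex.mk ph hs wH ⟶ ShortComplex.mk pW πW wW :=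
    { τ₁ := 𝟙 P
      τ₂ := biprod.inr ≫ wEH
      τ₃ := biprod.inr
      comm₁₂ := by rw [← hpW']; simp
      comm₂₃ := by
        dsimp
        rw [Category.assoc, hπW]
        simp }
  have hFnat : hY.extClass.comp (Ext.mk₀ (biprod.fst : R ⊞ S ⟶ R)) (add_zero 1) =
      hF.extClass := by
    have h := MyAux.extClass_naturality φF hY hF
    simpa [φF] using h.symm
  have hGnat : hY.extClass.comp (Ext.mk₀ (biprod.snd : R ⊞ S ⟶ S)) (add_zero 1) =
      hG.extClass := by
    have h := MyAux.extClass_naturality φG hY hG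
    simpa [φG] using h.symm
  have hEnat : (Ext.mk₀ (biprod.inl : R ⟶ R ⊞ S)).comp hW.extClass (zero_add 1) =
      hE.extClass := by
    have h := MyAux.extClass_naturality φE hE hW
    simpa [φE] using h
  have hHnat : (Ext.mk₀ (biprod.inr : S ⟶ R ⊞ S)).comp hW.extClass (zero_add 1) =
      hH.extClass := by
    have h := MyAux.extClass_naturality φH hH hW
    simpa [φH] using h
  -- decompose the identity of `R ⊞ S`
  have key : (Ext.mk₀ (𝟙 (R ⊞ S))) =
      Ext.mk₀ (biprod.fst ≫ biprod.inl) + Ext.mk₀ (biprod.snd ≫ biprod.inr) := by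
    rw [← MyAux.mk₀_add, biprod.total]
  calc hY.extClass.comp hW.extClass (by norm_num)
      = hY.extClass.comp ((Ext.mk₀ (𝟙 (R ⊞ S))).comp hW.extClass (zero_add 1))
        (by norm_num) := by rw [Ext.mk₀_id_comp]
    _ = hY.extClass.comp
          ((Ext.mk₀ (biprod.fst ≫ biprod.inl)).comp hW.extClass (zero_add 1))
        (by norm_num) +
        hY.extClass.comp
          ((Ext.mk₀ (biprod.snd ≫ biprod.inr)).comp hW.extClass (zero_add 1))
        (by norm_num) := by rw [key, Ext.add_comp, Ext.comp_add]
    _ = (hY.extClass.comp (Ext.mk₀ biprod.fst) (add_zero 1)).comp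
          ((Ext.mk₀ biprod.inl).comp hW.extClass (zero_add 1)) (by norm_num) +
        (hY.extClass.comp (Ext.mk₀ biprod.snd) (add_zero 1)).comp
          ((Ext.mk₀ biprod.inr).comp hW.extClass (zero_add 1)) (by norm_num) := by
        rw [Ext.comp_assoc_of_second_deg_zero, Ext.comp_assoc_of_second_deg_zero,
          Ext.mk₀_comp_mk₀_assoc, Ext.mk₀_comp_mk₀_assoc]
    _ = hF.extClass.comp hE.extClass (by norm_num) +
        hG.extClass.comp hH.extClass (by norm_num) := by
        rw [hFnat, hGnat, hEnat, hHnat]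
end

section
/- With notation as above, if the map α : Hom(R ⊕ S, P) → Ext¹(Q, P), α(f,g) = δ_F(f) + δ_G(g), is surjective, then any two completions X, X' of the 3×3 frame determine equal classes in Ext¹(Y, P); in particular, the completion is unique up to isomorphism of extensions of Y by P. -/
open CategoryTheory Abelian Limits

universe w v u

set_option maxHeartbeats 1600000 in
/-- If `α : Hom(R ⊕ S, P) → Ext¹(Q, P)`, `α(f, g) = δ_F(f) + δ_G(g)`, is
surjective, then any two completions of the 3×3 frame determine equal classes
in `Ext¹(Y, P)` (completions correspond to classes `x` with `γ(x) = [W]`,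
where `γ : Ext¹(Y, P) → Ext¹(R ⊕ S, P)` is composition with `R ⊕ S → Y`);
in particular the completion is unique up to isomorphism of extensions of `Y`
by `P`. -/
theorem statement14 {A : Type u} [CommRing A] [HasExt.{w} (ModuleCat.{v} A)]
    {P E R H S F G Q : ModuleCat.{v} A}
    (pe : P ⟶ E) (er : E ⟶ R) (wE : pe ≫ er = 0)
    (hE : (ShortComplex.mk pe er wE).ShortExact)
    (ph : P ⟶ H) (hs : H ⟶ S) (wH : ph ≫ hs = 0)
    (hH : (ShortComplex.mk ph hs wH).ShortExact)
    (rf : R ⟶ F) (fq : F ⟶ Q) (wF : rf ≫ fq = 0)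
    (hF : (ShortComplex.mk rf fq wF).ShortExact)
    (sg : S ⟶ G) (gq : G ⟶ Q) (wG : sg ≫ gq = 0)
    (hG : (ShortComplex.mk sg gq wG).ShortExact)
    -- `Y = F ×_Q G`, with the short exact sequence `0 → R ⊕ S → Y → Q → 0`
    {Y : ModuleCat.{v} A} (yF : Y ⟶ F) (yG : Y ⟶ G)
    (hYpb : IsPullback yF yG fq gq)
    (ιY : R ⊞ S ⟶ Y)
    (hιYF : ιY ≫ yF = biprod.desc rf 0) (hιYG : ιY ≫ yG = biprod.desc 0 sg)
    (wY : ιY ≫ (yF ≫ fq) = 0)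
    (hY : (ShortComplex.mk ιY (yF ≫ fq) wY).ShortExact)
    -- `W` is the codiagonal pushout of `E ⊕ H`, with `0 → P → W → R ⊕ S → 0`
    {W : ModuleCat.{v} A} (pW : P ⟶ W) (wEH : E ⊞ H ⟶ W)
    (hWpo : IsPushout (biprod.desc (𝟙 P) (𝟙 P)) (biprod.map pe ph) pW wEH)
    (πW : W ⟶ R ⊞ S) (hπW : wEH ≫ πW = biprod.map er hs)
    (wW : pW ≫ πW = 0)
    (hW : (ShortComplex.mk pW πW wW).ShortExact)
    -- `α` is surjective
    (hα : ∀ c : Ext Q P 1, ∃ (f : R ⟶ P) (g : S ⟶ P),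
      c = hF.extClass.comp (Ext.mk₀ f) (add_zero 1) +
        hG.extClass.comp (Ext.mk₀ g) (add_zero 1)) :
    ∀ x x' : Ext Y P 1,
      (Ext.mk₀ ιY).comp x (zero_add 1) = hW.extClass →
      (Ext.mk₀ ιY).comp x' (zero_add 1) = hW.extClass →
      x = x' := by
  intro x x' hx hx'
  have hker : (Ext.mk₀ ιY).comp (x - x') (zero_add 1) = 0 := by
    have h1 : (Ext.mk₀ ιY).comp (x - x') (zero_add 1) +
        (Ext.mk₀ ιY).comp x' (zero_add 1) = (Ext.mk₀ ιY).comp x (zero_add 1) := by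
      rw [← Ext.comp_add, sub_add_cancel]
    rw [hx, hx'] at h1
    exact add_eq_right.mp h1
  obtain ⟨c, hc⟩ := Ext.contravariant_sequence_exact₂ hY P (x - x') hker
  obtain ⟨f, g, hfg⟩ := hα c
  have hβF : (Ext.mk₀ (yF ≫ fq)).comp (hF.extClass.comp (Ext.mk₀ f) (add_zero 1))
      (zero_add 1) = 0 := by
    rw [← Ext.mk₀_comp_mk₀, Ext.comp_assoc_of_second_deg_zero,
      ← Ext.comp_assoc_of_third_deg_zero (Ext.mk₀ fq) hF.extClass (Ext.mk₀ f)
        (zero_add 1)]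
    have h0 : (Ext.mk₀ fq).comp hF.extClass (zero_add 1) = 0 := hF.comp_extClass
    rw [h0, Ext.zero_comp, Ext.comp_zero]
  have hβG : (Ext.mk₀ (yF ≫ fq)).comp (hG.extClass.comp (Ext.mk₀ g) (add_zero 1))
      (zero_add 1) = 0 := by
    rw [hYpb.w, ← Ext.mk₀_comp_mk₀, Ext.comp_assoc_of_second_deg_zero,
      ← Ext.comp_assoc_of_third_deg_zero (Ext.mk₀ gq) hG.extClass (Ext.mk₀ g)
        (zero_add 1)]
    have h0 : (Ext.mk₀ gq).comp hG.extClass (zero_add 1) = 0 := hG.comp_extClass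
    rw [h0, Ext.zero_comp, Ext.comp_zero]
  have hsub : x - x' = 0 := by
    rw [← hc, hfg, Ext.comp_add, hβF, hβG, add_zero]
  exact sub_eq_zero.mp hsub
end
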